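/- Consider the attitude error dynamics Ṙ_e = R_e R_p ê_ω R_pᵀ, J ė_ω = −R_pᵀ e_R − K_ω e_ω − ê_ω J e_ω − ê_ω J ω_p, where J is symmetric positive definite, K_ω is symmetric positive definite, K_R is symmetric with tr(K_R)I₃ − K_R positive definite, e_R := skew(K_R R_e)∨, and R_p(t) ∈ SO(3), ω_p(t) ∈ ℝ³ are arbitrary. Then the function V_R(R_e, e_ω) := (1/2) e_ωᵀ J e_ω + Ψ_{K_R}(R_e) satisfies along all solutions V̇_R = −e_ωᵀ K_ω e_ω ≤ 0. -/

import Mathlib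

open Matrix

attribute [local instance] Matrix.normedAddCommGroup Matrix.normedSpace

noncomputable section

/-- The hat map: ω ∈ ℝ³ ↦ skew-symmetric matrix ω̂ with ω̂ y = ω × y. -/
def hatM (ω : Fin 3 → ℝ) : Matrix (Fin 3) (Fin 3) ℝ :=
  !![0, -ω 2, ω 1; ω 2, 0, -ω 0; -ω 1, ω 0, 0]

/-- The vee map, inverse of the hat map on skew-symmetric matrices. -/
def veeM (A : Matrix (Fin 3) (Fin 3) ℝ) : Fin 3 → ℝ :=
  ![A 2 1, A 0 2, A 1 0]

/-- Skew-symmetric part: skew(A) = (A − Aᵀ)/2. -/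
def skewPart (A : Matrix (Fin 3) (Fin 3) ℝ) : Matrix (Fin 3) (Fin 3) ℝ :=
  (1 / 2 : ℝ) • (A - A.transpose)

/-- SO(3): 3×3 real orthogonal matrices with determinant 1. -/
def SO3 : Set (Matrix (Fin 3) (Fin 3) ℝ) :=
  {R | R.transpose * R = 1 ∧ R.det = 1}

/-- Navigation function Ψ_K(R) = (1/2) tr(K(I₃ − R)). -/
def PsiK (K R : Matrix (Fin 3) (Fin 3) ℝ) : ℝ :=
  (1 / 2) * (K * (1 - R)).trace


lemma dot_hat_self (x a : Fin 3 → ℝ) : x ⬝ᵥ (hatM x).mulVec a = 0 := by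
  simp [dotProduct, mulVec, hatM, Fin.sum_univ_three]
  ring

lemma dot_vee_skew (B : Matrix (Fin 3) (Fin 3) ℝ) (x : Fin 3 → ℝ) :
    x ⬝ᵥ veeM (skewPart B) = -(1/2) * (B * hatM x).trace := by
  simp [dotProduct, veeM, skewPart, hatM, trace, Matrix.mul_apply, Fin.sum_univ_three]
  ring

lemma hat_conj_det (A : Matrix (Fin 3) (Fin 3) ℝ) (w : Fin 3 → ℝ) :
    Aᵀ * hatM (A.mulVec w) * A = A.det • hatM w := by
  ext i j
  fin_cases i <;> fin_cases j <;>
    simp [hatM, Matrix.mul_apply, mulVec, dotProduct, det_fin_three, Fin.sum_univ_three] <;> ring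

lemma vee_hat (w : Fin 3 → ℝ) : veeM (hatM w) = w := by
  funext i; fin_cases i <;> simp [veeM, hatM]

lemma hat_vee_of_skew (S : Matrix (Fin 3) (Fin 3) ℝ) (h : Sᵀ = -S) :
    hatM (veeM S) = S := by
  have he : ∀ i j, S j i = -S i j := fun i j => by
    have := congrFun (congrFun h i) j; simpa [transpose_apply] using this
  ext i j
  fin_cases i <;> fin_cases j <;>
    simp [hatM, veeM] <;>
    first
      | (have := he 0 0; linarith)
      | (have := he 1 1; linarith)
      | (have := he 2 2; linarith)
      | (have := he 0 1; linarith)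
      | (have := he 0 2; linarith)
      | (have := he 1 2; linarith)

lemma skewPart_conj (P M : Matrix (Fin 3) (Fin 3) ℝ) :
    skewPart (Pᵀ * M * P) = Pᵀ * skewPart M * P := by
  simp [skewPart, transpose_mul, Matrix.mul_sub, Matrix.sub_mul, Matrix.mul_smul,
    Matrix.smul_mul, Matrix.mul_assoc]

lemma skewPart_isSkew (A : Matrix (Fin 3) (Fin 3) ℝ) : (skewPart A)ᵀ = -(skewPart A) := by
  simp [skewPart, transpose_smul, transpose_sub]
  ring_nf
  module

lemma SO3_mul_transpose {Q : Matrix (Fin 3) (Fin 3) ℝ} (h : Q ∈ SO3) : Q * Qᵀ = 1 :=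
  mul_eq_one_comm.mp h.1

lemma hat_conj_SO3 {Q : Matrix (Fin 3) (Fin 3) ℝ} (h : Q ∈ SO3) (w : Fin 3 → ℝ) :
    Q * hatM w * Qᵀ = hatM (Q.mulVec w) := by
  have h3 := hat_conj_det Q w
  rw [h.2, one_smul] at h3
  calc Q * hatM w * Qᵀ = Q * (Qᵀ * hatM (Q.mulVec w) * Q) * Qᵀ := by rw [h3]
    _ = (Q * Qᵀ) * hatM (Q.mulVec w) * (Q * Qᵀ) := by
        simp only [Matrix.mul_assoc]
    _ = hatM (Q.mulVec w) := by rw [SO3_mul_transpose h]; simp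

lemma transpose_SO3 {Q : Matrix (Fin 3) (Fin 3) ℝ} (h : Q ∈ SO3) : Qᵀ ∈ SO3 := by
  refine ⟨?_, by simp [SO3, h.2]⟩
  simp only [transpose_transpose]
  exact SO3_mul_transpose h


theorem lyapunov_attitude_error
    (J Kω KR : Matrix (Fin 3) (Fin 3) ℝ)
    (hJ : J.PosDef) (hKω : Kω.PosDef) (hKR : KR.IsSymm)
    (hKRpd : (KR.trace • (1 : Matrix (Fin 3) (Fin 3) ℝ) - KR).PosDef)
    (Re : ℝ → Matrix (Fin 3) (Fin 3) ℝ) (eω : ℝ → Fin 3 → ℝ)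
    (Rp : ℝ → Matrix (Fin 3) (Fin 3) ℝ) (ωp : ℝ → Fin 3 → ℝ)
    (hRe : ∀ t, Re t ∈ SO3) (hRp : ∀ t, Rp t ∈ SO3)
    (hdRe : ∀ t, HasDerivAt Re
      (Re t * (Rp t * hatM (eω t) * (Rp t).transpose)) t)
    (deω : ℝ → Fin 3 → ℝ)
    (hdeω : ∀ t, HasDerivAt eω (deω t) t)
    (hdyn : ∀ t, J.mulVec (deω t) =
      -((Rp t).transpose.mulVec (veeM (skewPart (KR * Re t))))
        - Kω.mulVec (eω t)
        - (hatM (eω t)).mulVec (J.mulVec (eω t))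
        - (hatM (eω t)).mulVec (J.mulVec (ωp t))) :
    ∀ t, HasDerivAt
        (fun s => (1 / 2) * (eω s ⬝ᵥ J.mulVec (eω s)) + PsiK KR (Re s))
        (-(eω t ⬝ᵥ Kω.mulVec (eω t))) t ∧
      -(eω t ⬝ᵥ Kω.mulVec (eω t)) ≤ 0 := by
  intro t
  constructor
  · -- derivative
    set x := eω t with hx
    set d := deω t with hd
    set P := Rp t with hP
    set D := Re t * (P * hatM x * Pᵀ) with hD
    have heωc : ∀ i, HasDerivAt (fun s => eω s i) (d i) t :=
      fun i => (hasDerivAt_pi.mp (hdeω t)) i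
    have hRec : ∀ i j, HasDerivAt (fun s => Re s i j) (D i j) t :=
      fun i j => (hasDerivAt_pi.mp ((hasDerivAt_pi.mp (hdRe t)) i)) j
    -- term 1
    have h1 : HasDerivAt (fun s => (1/2 : ℝ) * (eω s ⬝ᵥ J.mulVec (eω s)))
        ((1/2) * (d ⬝ᵥ J.mulVec x + x ⬝ᵥ J.mulVec d)) t := by
      have key : HasDerivAt (fun s => ∑ i, eω s i * ∑ j, J i j * eω s j)
          (∑ i, (d i * ∑ j, J i j * x j + x i * ∑ j, J i j * d j)) t := by
        apply HasDerivAt.fun_sum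
        intro i _
        exact (heωc i).mul (HasDerivAt.fun_sum (fun j _ => (heωc j).const_mul (J i j)))
      have := key.const_mul (1/2 : ℝ)
      convert this using 2
      · rfl
      · rfl
      swap
      · simp only [dotProduct, mulVec]
        rw [← Finset.sum_add_distrib]
      all_goals simp [dotProduct, mulVec]
    -- term 2
    have hPsi : ∀ M : Matrix (Fin 3) (Fin 3) ℝ,
        PsiK KR M = (1/2) * KR.trace - (1/2) * ∑ i, ∑ j, KR i j * M j i := by
      intro M
      simp [PsiK, Matrix.mul_sub, Matrix.mul_one, trace, Matrix.mul_apply, diag,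
        Finset.mul_sum, Finset.sum_sub_distrib, mul_sub, Matrix.one_apply, mul_ite,
        mul_one, mul_zero, Finset.sum_ite_eq']
    have h2 : HasDerivAt (fun s => PsiK KR (Re s))
        (-((1/2) * ∑ i, ∑ j, KR i j * D j i)) t := by
      have key2 : HasDerivAt (fun s => ∑ i, ∑ j, KR i j * Re s j i)
          (∑ i, ∑ j, KR i j * D j i) t :=
        HasDerivAt.fun_sum (fun i _ => HasDerivAt.fun_sum (fun j _ => (hRec j i).const_mul (KR i j)))
      have hfun : (fun s => PsiK KR (Re s))
          = fun s => (1/2) * KR.trace - (1/2) * ∑ i, ∑ j, KR i j * Re s j i :=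
        funext fun s => hPsi (Re s)
      rw [hfun]
      exact (key2.const_mul (1/2 : ℝ)).const_sub ((1/2) * KR.trace)
    have hsum := h1.add h2
    -- now fix the derivative value
    have hval : (1/2) * (d ⬝ᵥ J.mulVec x + x ⬝ᵥ J.mulVec d)
        + -((1/2) * ∑ i, ∑ j, KR i j * D j i) = -(x ⬝ᵥ Kω.mulVec x) := by
      -- symmetry of J
      have hJe : ∀ i j, J i j = J j i := by
        intro i j
        have := congrFun (congrFun hJ.isHermitian.eq j) i
        simpa using this
      have hsymJ : d ⬝ᵥ J.mulVec x = x ⬝ᵥ J.mulVec d := by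
        simp only [dotProduct, mulVec, Finset.mul_sum]
        rw [Finset.sum_comm]
        refine Finset.sum_congr rfl fun i _ => Finset.sum_congr rfl fun j _ => ?_
        rw [hJe j i]; ring
      -- dynamics
      have hB : x ⬝ᵥ J.mulVec d = -(x ⬝ᵥ Pᵀ.mulVec (veeM (skewPart (KR * Re t))))
          - x ⬝ᵥ Kω.mulVec x := by
        rw [hd, hdyn t, ← hx, ← hP]
        simp only [dotProduct_sub, dotProduct_neg, dot_hat_self, sub_zero]
      -- trace manipulation
      have htr : ∑ i, ∑ j, KR i j * D j i
          = ((Pᵀ * (KR * Re t) * P) * hatM x).trace := by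
        have e1 : ∑ i, ∑ j, KR i j * D j i = (KR * D).trace := by
          simp [trace, Matrix.mul_apply, diag]
        rw [e1, hD]
        have e2 : KR * (Re t * (P * hatM x * Pᵀ)) = (KR * Re t * P * hatM x) * Pᵀ := by
          simp [Matrix.mul_assoc]
        rw [e2, Matrix.trace_mul_comm]
        congr 1
        simp [Matrix.mul_assoc]
      have hskew : veeM (skewPart (Pᵀ * (KR * Re t) * P)) =
          Pᵀ.mulVec (veeM (skewPart (KR * Re t))) := by
        rw [skewPart_conj]
        rw [← hat_vee_of_skew (skewPart (KR * Re t)) (skewPart_isSkew _)]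
        rw [show Pᵀ * hatM (veeM (skewPart (KR * Re t))) * P
            = Pᵀ * hatM (veeM (skewPart (KR * Re t))) * (Pᵀ)ᵀ by rw [transpose_transpose]]
        rw [hat_conj_SO3 (transpose_SO3 (hRp t))]
        rw [vee_hat, hat_vee_of_skew _ (skewPart_isSkew _)]
      have htr2 : -((1/2) * ∑ i, ∑ j, KR i j * D j i)
          = x ⬝ᵥ Pᵀ.mulVec (veeM (skewPart (KR * Re t))) := by
        rw [htr, ← hskew, dot_vee_skew]; ring
      rw [htr2, hsymJ, hB]; ring
    rw [← hval]; exact hsum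
  · -- nonpositivity
    have := hKω.posSemidef.dotProduct_mulVec_nonneg (eω t)
    simp only [star_trivial] at this
    linarith
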